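/- arXiv:2101.06366 — 2 statements merged into one kernel-verified Lean document; each statement's English description precedes it below -/
import Mathlib

section
/- Let {X_{k,n} : k,n ≥ 1} be a double array of φ-subgaussian random variables with τ_φ(X_{k,n}) > 0 for all k,n, let g : [0,∞) → (0,∞) be non-decreasing, and let a_{m,j} = g(ln(mj)) ψ^{−1}(ln(mj)). Let f : [1,∞) → ℝ and α ∈ ℝ be such that g(ln(mj)) / τ_φ(X_{k,n}) ≥ f(mj/(kn)) ≥ 1 for all m,j ≥ 1, 1 ≤ k ≤ m, 1 ≤ n ≤ j, and such that Σ_{m=1}^∞ Σ_{j=1}^∞ Σ_{k=1}^m Σ_{n=1}^j (mj)^{−α − f(mj/(kn))} < +∞. Then Σ_{m=1}^∞ Σ_{j=1}^∞ (mj)^{−α} P(Y⁺_{m,j} > 0) < +∞. -/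
open MeasureTheory Real Filter Set

/-- An Orlicz N-function: continuous, even, convex, vanishing at `0`, monotone
increasing on `[0, ∞)`, with `φ x / x → 0` as `x → 0⁺` and `φ x / x → ∞` as `x → ∞`. -/
structure IsOrliczN (φ : ℝ → ℝ) : Prop where
  continuous : Continuous φ
  even : ∀ x, φ (-x) = φ x
  convexOn : ConvexOn ℝ Set.univ φ
  map_zero : φ 0 = 0
  strictMonoOn : StrictMonoOn φ (Set.Ici 0)
  tendsto_zero : Tendsto (fun x => φ x / x) (nhdsWithin 0 (Set.Ioi 0)) (nhds 0)
  tendsto_atTop : Tendsto (fun x => φ x / x) atTop atTop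

/-- `ψ` is the Young–Fenchel transform of `φ`: `ψ x = sup_{y ∈ ℝ} (x * y - φ y)`. -/
def IsYoungFenchel (φ ψ : ℝ → ℝ) : Prop :=
  ∀ x, IsLUB {z | ∃ y, z = x * y - φ y} (ψ x)

/-- The moment generating function bound `E exp(t X) ≤ exp (φ (a t))` with constant `a > 0`. -/
def PhiMGF (φ : ℝ → ℝ) {Ω : Type*} [MeasurableSpace Ω] (P : Measure Ω) (X : Ω → ℝ)
    (a : ℝ) : Prop :=
  0 < a ∧ ∀ t : ℝ, Integrable (fun ω => Real.exp (t * X ω)) P ∧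
    ∫ ω, Real.exp (t * X ω) ∂P ≤ Real.exp (φ (a * t))

/-- `X` is a `φ`-subgaussian random variable: centered, with an MGF bound. -/
def IsPhiSubGaussian (φ : ℝ → ℝ) {Ω : Type*} [MeasurableSpace Ω] (P : Measure Ω)
    (X : Ω → ℝ) : Prop :=
  Integrable X P ∧ (∫ ω, X ω ∂P) = 0 ∧ ∃ a, PhiMGF φ P X a

/-- The `φ`-subgaussian norm `τ_φ(X)`. -/
noncomputable def tauPhi (φ : ℝ → ℝ) {Ω : Type*} [MeasurableSpace Ω] (P : Measure Ω)
    (X : Ω → ℝ) : ℝ :=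
  sInf {a | PhiMGF φ P X a}

/-- `max_{1 ≤ k ≤ m, 1 ≤ n ≤ j} X_{k,n}(ω)`. -/
noncomputable def runMax {Ω : Type*} (X : ℕ → ℕ → Ω → ℝ) (m j : ℕ) (ω : Ω) : ℝ :=
  sSup {y | ∃ k n, 1 ≤ k ∧ k ≤ m ∧ 1 ≤ n ∧ n ≤ j ∧ y = X k n ω}

/-- Convergence of a double array `b m j` to `l` as `m ∨ j → ∞`. -/
def TendstoMaxIdx (b : ℕ → ℕ → ℝ) (l : ℝ) : Prop :=
  ∀ ε > 0, ∃ N : ℕ, ∀ m j : ℕ, 1 ≤ m → 1 ≤ j → N ≤ max m j → |b m j - l| < ε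


lemma phi_nonneg {φ : ℝ → ℝ} (hφ : IsOrliczN φ) (x : ℝ) : 0 ≤ φ x := by
  rcases le_total 0 x with h | h
  · rcases h.eq_or_lt with rfl | h'
    · exact hφ.map_zero.ge
    · simpa [hφ.map_zero] using (hφ.strictMonoOn Set.self_mem_Ici h h').le
  · rw [← hφ.even]
    have h' : (0:ℝ) ≤ -x := by linarith
    rcases h'.eq_or_lt with h2 | h2
    · simp [← h2, hφ.map_zero]
    · simpa [hφ.map_zero] using (hφ.strictMonoOn Set.self_mem_Ici h' h2).le

lemma phi_abs {φ : ℝ → ℝ} (hφ : IsOrliczN φ) (x : ℝ) : φ x = φ |x| := by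
  rcases le_total 0 x with h | h
  · rw [abs_of_nonneg h]
  · rw [abs_of_nonpos h, hφ.even]

lemma phi_mono_abs {φ : ℝ → ℝ} (hφ : IsOrliczN φ) {x y : ℝ} (h : |x| ≤ |y|) : φ x ≤ φ y := by
  rw [phi_abs hφ x, phi_abs hφ y]
  exact hφ.strictMonoOn.monotoneOn (abs_nonneg x) (abs_nonneg y) h

lemma psi_mono {φ ψ : ℝ → ℝ} (hφ : IsOrliczN φ) (hψ : IsYoungFenchel φ ψ)
    {x y : ℝ} (hx : 0 ≤ x) (hxy : x ≤ y) : ψ x ≤ ψ y := by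
  refine (hψ x).2 ?_
  rintro z ⟨w, rfl⟩
  have h1 : x * w ≤ y * |w| := by
    calc x * w ≤ x * |w| := mul_le_mul_of_nonneg_left (le_abs_self w) hx
    _ ≤ y * |w| := mul_le_mul_of_nonneg_right hxy (abs_nonneg w)
  calc x * w - φ w ≤ y * |w| - φ |w| := by rw [← phi_abs hφ]; linarith
  _ ≤ ψ y := (hψ y).1 ⟨|w|, rfl⟩

lemma psi_superhom {φ ψ : ℝ → ℝ} (hφ : IsOrliczN φ) (hψ : IsYoungFenchel φ ψ)
    {c x : ℝ} (hc : 1 ≤ c) : c * ψ x ≤ ψ (c * x) := by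
  have hc0 : 0 < c := lt_of_lt_of_le one_pos hc
  have h : ψ x ≤ ψ (c * x) / c := by
    refine (hψ x).2 ?_
    rintro z ⟨w, rfl⟩
    rw [le_div_iff₀ hc0]
    have h1 : φ w ≤ c * φ w := le_mul_of_one_le_left (phi_nonneg hφ w) hc
    have h2 : c * x * w - φ w ≤ ψ (c * x) := (hψ (c * x)).1 ⟨w, rfl⟩
    nlinarith
  calc c * ψ x ≤ c * (ψ (c * x) / c) := mul_le_mul_of_nonneg_left h hc0.le
  _ = ψ (c * x) := by field_simp

lemma phiMGF_of_lt {Ω : Type*} [MeasurableSpace Ω] {P : Measure Ω} {φ : ℝ → ℝ}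
    (hφ : IsOrliczN φ) {X : Ω → ℝ} (hsub : IsPhiSubGaussian φ P X) {a : ℝ}
    (ha : tauPhi φ P X < a) : PhiMGF φ P X a := by
  obtain ⟨-, -, a₀, ha₀⟩ := hsub
  have hne : {b | PhiMGF φ P X b}.Nonempty := ⟨a₀, ha₀⟩
  obtain ⟨b, hb, hba⟩ := exists_lt_of_csInf_lt hne ha
  refine ⟨hb.1.trans hba, fun t => ⟨(hb.2 t).1, (hb.2 t).2.trans ?_⟩⟩
  refine Real.exp_le_exp.mpr (phi_mono_abs hφ ?_)
  rw [abs_mul, abs_mul]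
  exact mul_le_mul_of_nonneg_right (by rw [abs_of_pos hb.1, abs_of_pos (hb.1.trans hba)]; exact hba.le) (abs_nonneg t)

lemma tail_bound {Ω : Type*} [MeasurableSpace Ω] (P : Measure Ω) [IsProbabilityMeasure P]
    {φ ψ : ℝ → ℝ} (hφ : IsOrliczN φ) (hψ : IsYoungFenchel φ ψ)
    {X : Ω → ℝ} (hsub : IsPhiSubGaussian φ P X) (hτ : 0 < tauPhi φ P X)
    {ε c : ℝ} (hε : 0 ≤ ε) (hc : c ≤ ψ (ε / tauPhi φ P X)) :
    P {ω | ε ≤ X ω} ≤ ENNReal.ofReal (Real.exp (-c)) := by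
  set τ := tauPhi φ P X with hτdef
  set r := (P {ω | ε ≤ X ω}).toReal with hrdef
  have hr1 : r ≤ 1 := by
    rw [hrdef]
    exact ENNReal.toReal_le_of_le_ofReal one_pos.le (by simpa using prob_le_one)
  have key : ∀ δ > (0:ℝ), r ≤ Real.exp (-c + δ) := by
    intro δ hδ
    rcases le_or_gt c δ with hcd | hcd
    · calc r ≤ 1 := hr1
      _ ≤ Real.exp (-c + δ) := by rw [← Real.exp_zero]; exact Real.exp_le_exp.mpr (by linarith)
    · -- c - δ > 0
      set x := ε / τ with hxdef
      have hxnn : 0 ≤ x := div_nonneg hε hτ.le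
      obtain ⟨z, ⟨y, rfl⟩, hz1, -⟩ := (hψ x).exists_between (show c - δ < ψ x by linarith)
      have hφy := phi_nonneg hφ y
      have hxy : 0 < x * y := by nlinarith
      have hy : 0 < y := by
        by_contra hy
        push_neg at hy
        nlinarith [mul_nonpos_of_nonneg_of_nonpos hxnn hy]
      have haux : ∀ a ∈ Set.Ioi τ, r ≤ Real.exp (φ y - y * ε / a) := by
        intro a ha
        have ha' : τ < a := ha
        have ha0 : 0 < a := hτ.trans ha'
        have hmgf := phiMGF_of_lt hφ hsub ha'
        set t := y / a with htdef
        have ht : 0 < t := div_pos hy ha0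
        have hch := ProbabilityTheory.measure_ge_le_exp_mul_mgf (X := X) (μ := P) ε ht.le (hmgf.2 t).1
        have hmg : ProbabilityTheory.mgf X P t ≤ Real.exp (φ (a * t)) := (hmgf.2 t).2
        have hat : a * t = y := by rw [htdef]; field_simp
        calc r ≤ Real.exp (-t * ε) * ProbabilityTheory.mgf X P t := hch
        _ ≤ Real.exp (-t * ε) * Real.exp (φ (a * t)) :=
            mul_le_mul_of_nonneg_left hmg (Real.exp_pos _).le
        _ = Real.exp (φ y - y * ε / a) := by
            rw [← Real.exp_add, hat]; congr 1; rw [htdef]; ring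
      have hlim : Tendsto (fun a : ℝ => Real.exp (φ y - y * ε / a)) (nhdsWithin τ (Set.Ioi τ))
          (nhds (Real.exp (φ y - y * ε / τ))) := by
        have hcont : ContinuousAt (fun a : ℝ => Real.exp (φ y - y * ε / a)) τ := by
          exact Real.continuous_exp.continuousAt.comp
            ((continuousAt_const.sub (continuousAt_const.div continuousAt_id hτ.ne')))
        exact hcont.tendsto.mono_left nhdsWithin_le_nhds
      have h2 : r ≤ Real.exp (φ y - y * ε / τ) :=
        ge_of_tendsto hlim (eventually_nhdsWithin_of_forall haux)
      calc r ≤ Real.exp (φ y - y * ε / τ) := h2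
      _ ≤ Real.exp (-c + δ) := by
          refine Real.exp_le_exp.mpr ?_
          have hxy2 : y * ε / τ = x * y := by rw [hxdef]; ring
          have h3 : φ y - y * ε / τ = -(x * y - φ y) := by rw [hxy2]; ring
          rw [h3]; linarith
  have hfin : r ≤ Real.exp (-c) := by
    have hlim : Tendsto (fun δ : ℝ => Real.exp (-c + δ)) (nhdsWithin 0 (Set.Ioi 0))
        (nhds (Real.exp (-c))) := by
      have : ContinuousAt (fun δ : ℝ => Real.exp (-c + δ)) 0 :=
        Real.continuous_exp.continuousAt.comp (continuousAt_const.add continuousAt_id)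
      simpa using this.tendsto.mono_left nhdsWithin_le_nhds
    exact ge_of_tendsto hlim (eventually_nhdsWithin_of_forall fun δ hδ => key δ hδ)
  calc P {ω | ε ≤ X ω} = ENNReal.ofReal r := (ENNReal.ofReal_toReal (measure_ne_top P _)).symm
  _ ≤ ENNReal.ofReal (Real.exp (-c)) := ENNReal.ofReal_le_ofReal hfin

/-- Theorem 4: if `g(ln(mj))/τ_φ(X_{k,n}) ≥ f(mj/(kn)) ≥ 1` and the
quadruple series `Σ_{m,j} Σ_{k≤m,n≤j} (mj)^{-α-f(mj/(kn))}` converges, then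
`Σ_{m,j} (mj)^{-α} P(Y⁺_{m,j} > 0) < ∞`, where `a_{m,j} = g(ln(mj)) ψ⁻¹(ln(mj))`. -/
theorem sum_prob_pos_part_lt_top
    {Ω : Type*} [MeasurableSpace Ω] (P : Measure Ω) [IsProbabilityMeasure P]
    (φ ψ ψinv g : ℝ → ℝ) (hφ : IsOrliczN φ) (hψ : IsYoungFenchel φ ψ)
    (hψinv : ∀ x, 0 ≤ x → 0 ≤ ψinv x ∧ ψ (ψinv x) = x)
    (hg_mono : MonotoneOn g (Set.Ici 0)) (hg_pos : ∀ x, 0 ≤ x → 0 < g x)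
    (X : ℕ → ℕ → Ω → ℝ)
    (hsub : ∀ k n : ℕ, 1 ≤ k → 1 ≤ n → IsPhiSubGaussian φ P (X k n))
    (hτpos : ∀ k n : ℕ, 1 ≤ k → 1 ≤ n → 0 < tauPhi φ P (X k n))
    (f : ℝ → ℝ) (α : ℝ)
    (hf : ∀ m j k n : ℕ, 1 ≤ k → k ≤ m → 1 ≤ n → n ≤ j →
      1 ≤ f (((m * j : ℕ) : ℝ) / ((k * n : ℕ) : ℝ)) ∧
      f (((m * j : ℕ) : ℝ) / ((k * n : ℕ) : ℝ))
        ≤ g (Real.log ((m * j : ℕ) : ℝ)) / tauPhi φ P (X k n))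
    (hsum : (∑' m : ℕ, ∑' j : ℕ, ∑ k ∈ Finset.Icc 1 (m + 1), ∑ n ∈ Finset.Icc 1 (j + 1),
      ENNReal.ofReal (((((m + 1) * (j + 1) : ℕ)) : ℝ) ^
        (-α - f (((((m + 1) * (j + 1) : ℕ)) : ℝ) / ((k * n : ℕ) : ℝ))))) < ⊤) :
    (∑' m : ℕ, ∑' j : ℕ,
      ENNReal.ofReal (((((m + 1) * (j + 1) : ℕ)) : ℝ) ^ (-α)) *
        P {ω | 0 < max (runMax X (m + 1) (j + 1) ω
          - g (Real.log ((((m + 1) * (j + 1) : ℕ)) : ℝ))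
            * ψinv (Real.log ((((m + 1) * (j + 1) : ℕ)) : ℝ))) 0}) < ⊤ := by
  have key : ∀ m j : ℕ,
      ENNReal.ofReal (((((m + 1) * (j + 1) : ℕ)) : ℝ) ^ (-α)) *
        P {ω | 0 < max (runMax X (m + 1) (j + 1) ω
          - g (Real.log ((((m + 1) * (j + 1) : ℕ)) : ℝ))
            * ψinv (Real.log ((((m + 1) * (j + 1) : ℕ)) : ℝ))) 0} ≤
      ∑ k ∈ Finset.Icc 1 (m + 1), ∑ n ∈ Finset.Icc 1 (j + 1),
        ENNReal.ofReal (((((m + 1) * (j + 1) : ℕ)) : ℝ) ^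
          (-α - f (((((m + 1) * (j + 1) : ℕ)) : ℝ) / ((k * n : ℕ) : ℝ)))) := by
    intro m j
    have hN1 : 1 ≤ (m + 1) * (j + 1) := Nat.one_le_iff_ne_zero.mpr (by positivity)
    have hr1 : (1:ℝ) ≤ (((m + 1) * (j + 1) : ℕ) : ℝ) := by exact_mod_cast hN1
    have hr0 : (0:ℝ) < (((m + 1) * (j + 1) : ℕ) : ℝ) := lt_of_lt_of_le one_pos hr1
    set r : ℝ := (((m + 1) * (j + 1) : ℕ) : ℝ) with hrdef
    set L : ℝ := Real.log r with hLdef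
    have hL : 0 ≤ L := Real.log_nonneg hr1
    set a : ℝ := g L * ψinv L with hadef
    -- step 1: the event is contained in a finite union
    have hAeq : {ω | 0 < max (runMax X (m + 1) (j + 1) ω - a) 0}
        = {ω | a < runMax X (m + 1) (j + 1) ω} := by
      ext ω; simp [lt_max_iff, sub_pos]
    have hsubset : {ω | a < runMax X (m + 1) (j + 1) ω} ⊆
        ⋃ k ∈ Finset.Icc 1 (m + 1), ⋃ n ∈ Finset.Icc 1 (j + 1), {ω | a ≤ X k n ω} := by
      intro ω hω
      set S : Set ℝ := {y | ∃ k n, 1 ≤ k ∧ k ≤ m + 1 ∧ 1 ≤ n ∧ n ≤ j + 1 ∧ y = X k n ω} with hSdef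
      have hSfin : S.Finite := by
        refine Set.Finite.subset (((Set.finite_Icc 1 (m+1)).prod (Set.finite_Icc 1 (j+1))).image
          (fun p : ℕ × ℕ => X p.1 p.2 ω)) ?_
        rintro z ⟨k, n, hk1, hkM, hn1, hnJ, rfl⟩
        exact ⟨(k, n), ⟨Set.mem_Icc.mpr ⟨hk1, hkM⟩, Set.mem_Icc.mpr ⟨hn1, hnJ⟩⟩, rfl⟩
      have hSne : S.Nonempty := ⟨X 1 1 ω, 1, 1, le_rfl, Nat.le_add_left 1 m, le_rfl,
        Nat.le_add_left 1 j, rfl⟩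
      have hmem : runMax X (m + 1) (j + 1) ω ∈ S := Set.Nonempty.csSup_mem hSne hSfin
      obtain ⟨k, n, hk1, hkM, hn1, hnJ, heq⟩ := hmem
      have hlt : a < X k n ω := heq ▸ hω
      simp only [Set.mem_iUnion, Set.mem_setOf_eq]
      exact ⟨k, Finset.mem_Icc.mpr ⟨hk1, hkM⟩, n, Finset.mem_Icc.mpr ⟨hn1, hnJ⟩, hlt.le⟩
    have hPA : P {ω | 0 < max (runMax X (m + 1) (j + 1) ω - a) 0} ≤
        ∑ k ∈ Finset.Icc 1 (m + 1), ∑ n ∈ Finset.Icc 1 (j + 1), P {ω | a ≤ X k n ω} := by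
      calc P {ω | 0 < max (runMax X (m + 1) (j + 1) ω - a) 0}
          ≤ P (⋃ k ∈ Finset.Icc 1 (m + 1), ⋃ n ∈ Finset.Icc 1 (j + 1), {ω | a ≤ X k n ω}) := by
            rw [hAeq]; exact measure_mono hsubset
      _ ≤ ∑ k ∈ Finset.Icc 1 (m + 1),
            P (⋃ n ∈ Finset.Icc 1 (j + 1), {ω | a ≤ X k n ω}) := measure_biUnion_finset_le _ _
      _ ≤ ∑ k ∈ Finset.Icc 1 (m + 1), ∑ n ∈ Finset.Icc 1 (j + 1), P {ω | a ≤ X k n ω} :=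
            Finset.sum_le_sum fun k _ => measure_biUnion_finset_le _ _
    -- step 2: tail bound for each term
    have htail : ∀ k ∈ Finset.Icc 1 (m + 1), ∀ n ∈ Finset.Icc 1 (j + 1),
        P {ω | a ≤ X k n ω} ≤
          ENNReal.ofReal (Real.exp (-(f (r / ((k * n : ℕ) : ℝ)) * L))) := by
      intro k hk n hn
      obtain ⟨hk1, hkM⟩ := Finset.mem_Icc.mp hk
      obtain ⟨hn1, hnJ⟩ := Finset.mem_Icc.mp hn
      obtain ⟨hfv1, hfv2⟩ := hf (m + 1) (j + 1) k n hk1 hkM hn1 hnJ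
      have hτ := hτpos k n hk1 hn1
      have hψL := hψinv L hL
      have hε : 0 ≤ a := mul_nonneg (hg_pos L hL).le hψL.1
      refine tail_bound P hφ hψ (hsub k n hk1 hn1) hτ hε ?_
      set fv := f (r / ((k * n : ℕ) : ℝ)) with hfvdef
      have h2 : fv * ψinv L ≤ a / tauPhi φ P (X k n) := by
        have : a / tauPhi φ P (X k n) = (g L / tauPhi φ P (X k n)) * ψinv L := by
          rw [hadef]; ring
        rw [this]
        exact mul_le_mul_of_nonneg_right hfv2 hψL.1
      calc fv * L = fv * ψ (ψinv L) := by rw [hψL.2]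
      _ ≤ ψ (fv * ψinv L) := psi_superhom hφ hψ hfv1
      _ ≤ ψ (a / tauPhi φ P (X k n)) :=
          psi_mono hφ hψ (mul_nonneg (le_trans one_pos.le hfv1) hψL.1) h2
    -- step 3: arithmetic
    have hmul : ∀ k n : ℕ,
        ENNReal.ofReal (r ^ (-α)) *
          ENNReal.ofReal (Real.exp (-(f (r / ((k * n : ℕ) : ℝ)) * L))) =
        ENNReal.ofReal (r ^ (-α - f (r / ((k * n : ℕ) : ℝ)))) := by
      intro k n
      rw [← ENNReal.ofReal_mul (Real.rpow_nonneg hr0.le _)]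
      congr 1
      have h1 : r ^ (-α - f (r / ((k * n : ℕ) : ℝ)))
          = r ^ (-α) * r ^ (-(f (r / ((k * n : ℕ) : ℝ)))) := by
        rw [← Real.rpow_add hr0]; ring_nf
      have h2 : r ^ (-(f (r / ((k * n : ℕ) : ℝ))))
          = Real.exp (-(f (r / ((k * n : ℕ) : ℝ)) * L)) := by
        rw [Real.rpow_def_of_pos hr0, hLdef]; ring_nf
      rw [h1, h2]
    calc ENNReal.ofReal (r ^ (-α)) *
          P {ω | 0 < max (runMax X (m + 1) (j + 1) ω - a) 0}
        ≤ ENNReal.ofReal (r ^ (-α)) *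
          ∑ k ∈ Finset.Icc 1 (m + 1), ∑ n ∈ Finset.Icc 1 (j + 1),
            ENNReal.ofReal (Real.exp (-(f (r / ((k * n : ℕ) : ℝ)) * L))) := by
          refine mul_le_mul_right (hPA.trans ?_) _
          exact Finset.sum_le_sum fun k hk => Finset.sum_le_sum fun n hn => htail k hk n hn
    _ = ∑ k ∈ Finset.Icc 1 (m + 1), ∑ n ∈ Finset.Icc 1 (j + 1),
          ENNReal.ofReal (r ^ (-α - f (r / ((k * n : ℕ) : ℝ)))) := by
        rw [Finset.mul_sum]
        refine Finset.sum_congr rfl fun k _ => ?_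
        rw [Finset.mul_sum]
        exact Finset.sum_congr rfl fun n _ => hmul k n
  refine lt_of_le_of_lt ?_ hsum
  exact ENNReal.tsum_le_tsum fun m => ENNReal.tsum_le_tsum fun j => key m j
end

section
/- Let {X_{k,n} : k,n ≥ 1} be a double array of φ-subgaussian random variables with τ_φ(X_{k,n}) > 0 for all k,n, let g : [0,∞) → (0,∞) be non-decreasing, and let a_{m,j} = g(ln(mj)) ψ^{−1}(ln(mj)). Let f : [1,∞) → ℝ satisfy g(ln(mj)) / τ_φ(X_{k,n}) ≥ f(mj/(kn)) ≥ 1 for all m,j ≥ 1, 1 ≤ k ≤ m, 1 ≤ n ≤ j, and suppose there is c₀ > 0 with f(x) ≥ c₀ for all x ≥ 1. Then for every α > 2 − c₀ it holds that Σ_{m=1}^∞ Σ_{j=1}^∞ (mj)^{−α} P(Y⁺_{m,j} > 0) < +∞. -/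
open MeasureTheory Real Filter Set

lemma chernoff {Ω : Type*} [MeasurableSpace Ω] (P : Measure Ω) [IsProbabilityMeasure P]
    {φ : ℝ → ℝ} {X : Ω → ℝ} {a' : ℝ} (h : PhiMGF φ P X a') (x y : ℝ) (hy : 0 ≤ y) :
    P {ω | x < X ω} ≤ ENNReal.ofReal (Real.exp (φ y - (x / a') * y)) := by
  obtain ⟨ha', hmgf⟩ := h
  set t := y / a' with ht
  have hat : a' * t = y := by rw [ht]; field_simp [ha'.ne']
  have htnn : 0 ≤ t := div_nonneg hy ha'.le
  obtain ⟨hint, hbd⟩ := hmgf t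
  have hsubset : {ω | x < X ω} ⊆ {ω | Real.exp (t*x) ≤ Real.exp (t * X ω)} := by
    intro ω hω
    exact Real.exp_le_exp.2 (mul_le_mul_of_nonneg_left (le_of_lt hω) htnn)
  refine (measure_mono hsubset).trans ?_
  have hm := mul_meas_ge_le_integral_of_nonneg (μ := P) (f := fun ω => Real.exp (t * X ω))
      (Filter.Eventually.of_forall fun ω => (Real.exp_pos _).le) hint (Real.exp (t*x))
  have hfin : P {ω | Real.exp (t*x) ≤ Real.exp (t * X ω)} ≠ ⊤ := measure_ne_top _ _
  rw [← ENNReal.ofReal_toReal hfin]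
  apply ENNReal.ofReal_le_ofReal
  have hetx : (0:ℝ) < Real.exp (t*x) := Real.exp_pos _
  have h1 : (P {ω | Real.exp (t*x) ≤ Real.exp (t * X ω)}).toReal
      ≤ (∫ ω, Real.exp (t * X ω) ∂P) / Real.exp (t*x) := by
    rw [le_div_iff₀ hetx]
    calc (P {ω | Real.exp (t*x) ≤ Real.exp (t * X ω)}).toReal * Real.exp (t*x)
        = Real.exp (t*x) * (P {ω | Real.exp (t*x) ≤ Real.exp (t * X ω)}).toReal := by ring
      _ ≤ _ := hm
  refine h1.trans ?_
  have h2 : (∫ ω, Real.exp (t * X ω) ∂P) / Real.exp (t*x)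
      ≤ Real.exp (φ (a'*t)) / Real.exp (t*x) := by gcongr
  refine h2.trans ?_
  rw [← Real.exp_sub, hat]
  apply Real.exp_le_exp.2
  have : t * x = x / a' * y := by rw [ht]; ring
  rw [this]

lemma tsum_rpow_lt_top (γ : ℝ) (hγ : 1 < γ) :
    (∑' m : ℕ, ∑' j : ℕ, ENNReal.ofReal (((((m+1)*(j+1) : ℕ)) : ℝ) ^ (-γ))) < ⊤ := by
  have hsum : Summable (fun n : ℕ => (((n+1 : ℕ)):ℝ) ^ (-γ)) := by
    have h0 := Real.summable_nat_rpow (p := -γ) |>.2 (by linarith)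
    have := (summable_nat_add_iff 1).2 h0
    exact this
  have hC : (∑' j : ℕ, ENNReal.ofReal ((((j+1 : ℕ)):ℝ) ^ (-γ))) < ⊤ := by
    rw [← ENNReal.ofReal_tsum_of_nonneg (fun n => Real.rpow_nonneg (by positivity) _) hsum]
    exact ENNReal.ofReal_lt_top
  have hsplit : ∀ m j : ℕ, ENNReal.ofReal (((((m+1)*(j+1) : ℕ)) : ℝ) ^ (-γ))
      = ENNReal.ofReal ((((m+1:ℕ)):ℝ) ^ (-γ)) * ENNReal.ofReal ((((j+1:ℕ)):ℝ) ^ (-γ)) := by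
    intro m j
    rw [← ENNReal.ofReal_mul (Real.rpow_nonneg (by positivity) _), ← Real.mul_rpow (by positivity) (by positivity)]
    norm_cast
  calc (∑' m : ℕ, ∑' j : ℕ, ENNReal.ofReal (((((m+1)*(j+1) : ℕ)) : ℝ) ^ (-γ)))
      = ∑' m : ℕ, ENNReal.ofReal ((((m+1:ℕ)):ℝ) ^ (-γ)) * ∑' j : ℕ, ENNReal.ofReal ((((j+1:ℕ)):ℝ) ^ (-γ)) := by
        congr 1; funext m
        rw [← ENNReal.tsum_mul_left]
        congr 1; funext j; exact hsplit m j
    _ = (∑' m : ℕ, ENNReal.ofReal ((((m+1:ℕ)):ℝ) ^ (-γ))) * ∑' j : ℕ, ENNReal.ofReal ((((j+1:ℕ)):ℝ) ^ (-γ)) := by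
        rw [ENNReal.tsum_mul_right]
    _ < ⊤ := ENNReal.mul_lt_top hC hC

/-- Corollary 3: if moreover `f(x) ≥ c₀ > 0` for all `x ≥ 1`, then for every
`α > 2 - c₀` one has `Σ_{m,j} (mj)^{-α} P(Y⁺_{m,j} > 0) < ∞`. -/
theorem sum_prob_pos_part_lt_top_of_f_bounded_below
    {Ω : Type*} [MeasurableSpace Ω] (P : Measure Ω) [IsProbabilityMeasure P]
    (φ ψ ψinv g : ℝ → ℝ) (hφ : IsOrliczN φ) (hψ : IsYoungFenchel φ ψ)
    (hψinv : ∀ x, 0 ≤ x → 0 ≤ ψinv x ∧ ψ (ψinv x) = x)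
    (hg_mono : MonotoneOn g (Set.Ici 0)) (hg_pos : ∀ x, 0 ≤ x → 0 < g x)
    (X : ℕ → ℕ → Ω → ℝ)
    (hsub : ∀ k n : ℕ, 1 ≤ k → 1 ≤ n → IsPhiSubGaussian φ P (X k n))
    (hτpos : ∀ k n : ℕ, 1 ≤ k → 1 ≤ n → 0 < tauPhi φ P (X k n))
    (f : ℝ → ℝ)
    (hf : ∀ m j k n : ℕ, 1 ≤ k → k ≤ m → 1 ≤ n → n ≤ j →
      1 ≤ f (((m * j : ℕ) : ℝ) / ((k * n : ℕ) : ℝ)) ∧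
      f (((m * j : ℕ) : ℝ) / ((k * n : ℕ) : ℝ))
        ≤ g (Real.log ((m * j : ℕ) : ℝ)) / tauPhi φ P (X k n))
    (c₀ : ℝ) (hc₀ : 0 < c₀) (hfc₀ : ∀ x : ℝ, 1 ≤ x → c₀ ≤ f x)
    (α : ℝ) (hα : 2 - c₀ < α) :
    (∑' m : ℕ, ∑' j : ℕ,
      ENNReal.ofReal (((((m + 1) * (j + 1) : ℕ)) : ℝ) ^ (-α)) *
        P {ω | 0 < max (runMax X (m + 1) (j + 1) ω
          - g (Real.log ((((m + 1) * (j + 1) : ℕ)) : ℝ))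
            * ψinv (Real.log ((((m + 1) * (j + 1) : ℕ)) : ℝ))) 0}) < ⊤ := by
  -- Key probabilistic estimate
  have key : ∀ β : ℝ, 1 < β → β < c₀ → ∀ m j : ℕ,
      P {ω | 0 < max (runMax X (m + 1) (j + 1) ω
          - g (Real.log ((((m + 1) * (j + 1) : ℕ)) : ℝ))
            * ψinv (Real.log ((((m + 1) * (j + 1) : ℕ)) : ℝ))) 0}
        ≤ ENNReal.ofReal (((((m + 1) * (j + 1) : ℕ)) : ℝ) ^ ((1:ℝ) - β)) := by
    intro β hβ1 hβc m j
    set N : ℕ := (m + 1) * (j + 1) with hN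
    have hN1 : 1 ≤ N := Nat.one_le_iff_ne_zero.2 (by rw [hN]; positivity)
    have hNR : (1:ℝ) ≤ (N : ℝ) := by exact_mod_cast hN1
    set L : ℝ := Real.log ((N : ℕ) : ℝ) with hLdef
    have hL0 : 0 ≤ L := Real.log_nonneg hNR
    set a : ℝ := g L * ψinv L with hadef
    have hEeq : {ω | 0 < max (runMax X (m + 1) (j + 1) ω - a) 0}
        = {ω | a < runMax X (m + 1) (j + 1) ω} := by
      ext ω; simp [lt_max_iff, sub_pos]
    rw [hEeq]
    have hψLnn : 0 ≤ ψinv L := (hψinv L hL0).1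
    -- per-variable bound
    have hvar : ∀ k n : ℕ, 1 ≤ k → k ≤ m + 1 → 1 ≤ n → n ≤ j + 1 →
        P {ω | a < X k n ω} ≤ ENNReal.ofReal ((N : ℝ) ^ (-β)) := by
      intro k n hk1 hkm hn1 hnj
      by_cases hNone : N = 1
      · have : ((N:ℝ)) ^ (-β) = 1 := by rw [hNone]; norm_num
        rw [this, ENNReal.ofReal_one]
        exact prob_le_one
      · have hN2 : 2 ≤ N := by omega
        have hNgt1 : (1:ℝ) < (N : ℝ) := by exact_mod_cast hN2
        have hL : 0 < L := Real.log_pos hNgt1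
        have hτ : 0 < tauPhi φ P (X k n) := hτpos k n hk1 hn1
        set τ : ℝ := tauPhi φ P (X k n) with hτdef
        set β' : ℝ := (β + c₀) / 2 with hβ'def
        have hβ'1 : 1 < β' := by simp only [hβ'def]; linarith
        have hββ' : β < β' := by simp only [hβ'def]; linarith
        have hβ'c : β' < c₀ := by simp only [hβ'def]; linarith
        have hβ'pos : 0 < β' := by linarith
        -- pick a' close to τ
        have hsetne : {b | PhiMGF φ P (X k n) b}.Nonempty := (hsub k n hk1 hn1).2.2
        have hlt : τ < (c₀ / β') * τ := by
          have h1 : 1 < c₀ / β' := (one_lt_div hβ'pos).2 hβ'c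
          nlinarith
        obtain ⟨a', ha'mem, ha'lt⟩ := exists_lt_of_csInf_lt hsetne hlt
        have ha'pos : 0 < a' := ha'mem.1
        -- c₀ τ ψinv L ≤ a
        have hff := hf (m + 1) (j + 1) k n hk1 hkm hn1 hnj
        have hknpos : 0 < ((k * n : ℕ) : ℝ) := by
          have : 1 ≤ k * n := Nat.one_le_iff_ne_zero.2 (by positivity)
          exact_mod_cast this
        have harg : 1 ≤ (((m + 1) * (j + 1) : ℕ) : ℝ) / ((k * n : ℕ) : ℝ) := by
          rw [one_le_div hknpos]
          exact_mod_cast Nat.mul_le_mul hkm hnj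
        have hgτ : c₀ ≤ g L / τ := le_trans (hfc₀ _ harg) hff.2
        have hga : c₀ * τ ≤ g L := (le_div_iff₀ hτ).1 hgτ
        have hxge : c₀ * τ * ψinv L ≤ a := by
          rw [hadef]; exact mul_le_mul_of_nonneg_right hga hψLnn
        have hratio : β' * ψinv L ≤ a / a' := by
          rw [le_div_iff₀ ha'pos]
          calc β' * ψinv L * a' ≤ β' * ψinv L * ((c₀ / β') * τ) := by
                apply mul_le_mul_of_nonneg_left ha'lt.le (by positivity)
            _ = c₀ * τ * ψinv L := by field_simp
            _ ≤ a := hxge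
        -- find witness y from the LUB property
        have hlub := hψ (ψinv L)
        rw [(hψinv L hL0).2] at hlub
        have hex : ∃ z ∈ {z | ∃ y, z = ψinv L * y - φ y}, (β / β') * L < z := by
          by_contra hc
          push_neg at hc
          have hub : (β / β') * L ∈ upperBounds {z | ∃ y, z = ψinv L * y - φ y} :=
            fun z hz => hc z hz
          have hL2 := hlub.2 hub
          have : β / β' < 1 := (div_lt_one hβ'pos).2 hββ'
          nlinarith
        obtain ⟨z, ⟨y, rfl⟩, hz⟩ := hex
        set y' : ℝ := |y| with hy'def
        have hy'nn : 0 ≤ y' := abs_nonneg y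
        have hφy' : φ y' = φ y := by
          rcases abs_choice y with h | h
          · rw [hy'def, h]
          · rw [hy'def, h, hφ.even]
        have hz' : (β / β') * L < ψinv L * y' - φ y' := by
          rw [hφy']
          have : ψinv L * y ≤ ψinv L * y' :=
            mul_le_mul_of_nonneg_left (le_abs_self y) hψLnn
          linarith
        -- exponent bound
        have hexp : φ y' - (a / a') * y' ≤ -(β * L) := by
          have h1 : β' * (ψinv L * y') ≤ (a / a') * y' := by
            have h := mul_le_mul_of_nonneg_right hratio hy'nn
            rw [← mul_assoc]; exact h
          have h3 : β' * ((β / β') * L) = β * L := by field_simp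
          have h4 : β * L < β' * (ψinv L * y' - φ y') := by
            rw [← h3]; exact mul_lt_mul_of_pos_left hz' hβ'pos
          have h5 : 0 ≤ (β' - 1) * φ y' := mul_nonneg (by linarith) (phi_nonneg hφ y')
          have h6 : β' * (ψinv L * y' - φ y') = β' * (ψinv L * y') - β' * φ y' := by ring
          have h7 : (β' - 1) * φ y' = β' * φ y' - φ y' := by ring
          linarith
        have hcher := chernoff P ha'mem a y' hy'nn
        refine hcher.trans (ENNReal.ofReal_le_ofReal ?_)
        rw [Real.rpow_def_of_pos (by linarith) (-β)]
        apply Real.exp_le_exp.2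
        have : Real.log ((N:ℕ):ℝ) * (-β) = -(β * L) := by rw [← hLdef]; ring
        rw [this]
        exact hexp
    -- union bound
    have hsubset : {ω | a < runMax X (m + 1) (j + 1) ω}
        ⊆ ⋃ k ∈ Finset.Icc 1 (m + 1), ⋃ n ∈ Finset.Icc 1 (j + 1), {ω | a < X k n ω} := by
      intro ω hω
      by_contra hc
      simp only [Set.mem_iUnion, Finset.mem_Icc, Set.mem_setOf_eq, not_exists, not_lt] at hc
      have hle : runMax X (m + 1) (j + 1) ω ≤ a := by
        apply csSup_le
        · exact ⟨X 1 1 ω, 1, 1, le_refl 1, by omega, le_refl 1, by omega, rfl⟩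
        · rintro z ⟨k, n, hk1, hkm, hn1, hnj, rfl⟩
          exact hc k ⟨hk1, hkm⟩ n ⟨hn1, hnj⟩
      exact absurd hω (not_lt.2 hle)
    calc P {ω | a < runMax X (m + 1) (j + 1) ω}
        ≤ P (⋃ k ∈ Finset.Icc 1 (m + 1), ⋃ n ∈ Finset.Icc 1 (j + 1), {ω | a < X k n ω}) :=
          measure_mono hsubset
      _ ≤ ∑ k ∈ Finset.Icc 1 (m + 1), P (⋃ n ∈ Finset.Icc 1 (j + 1), {ω | a < X k n ω}) :=
          measure_biUnion_finset_le _ _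
      _ ≤ ∑ k ∈ Finset.Icc 1 (m + 1), ∑ n ∈ Finset.Icc 1 (j + 1), P {ω | a < X k n ω} :=
          Finset.sum_le_sum fun k _ => measure_biUnion_finset_le _ _
      _ ≤ ∑ k ∈ Finset.Icc 1 (m + 1), ∑ n ∈ Finset.Icc 1 (j + 1),
            ENNReal.ofReal ((N : ℝ) ^ (-β)) := by
          apply Finset.sum_le_sum
          intro k hk
          apply Finset.sum_le_sum
          intro n hn
          simp only [Finset.mem_Icc] at hk hn
          exact hvar k n hk.1 hk.2 hn.1 hn.2
      _ = ((m + 1 : ℕ) : ENNReal) * (((j + 1 : ℕ) : ENNReal) * ENNReal.ofReal ((N : ℝ) ^ (-β))) := by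
          simp [Finset.sum_const, Nat.card_Icc, nsmul_eq_mul, mul_assoc]
      _ ≤ ENNReal.ofReal ((N : ℝ) ^ ((1:ℝ) - β)) := by
          rw [← ENNReal.ofReal_natCast (m + 1), ← ENNReal.ofReal_natCast (j + 1),
            ← ENNReal.ofReal_mul (by positivity), ← ENNReal.ofReal_mul (by positivity)]
          apply ENNReal.ofReal_le_ofReal
          have hNpos : (0:ℝ) < (N : ℝ) := by linarith
          have hcast : (((m+1:ℕ)):ℝ) * (((j+1:ℕ)):ℝ) = (N : ℝ) := by
            rw [hN]; push_cast; ring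
          apply le_of_eq
          calc (((m+1:ℕ)):ℝ) * ((((j+1:ℕ)):ℝ) * (N : ℝ) ^ (-β))
              = (N : ℝ) * (N : ℝ) ^ (-β) := by rw [← mul_assoc, hcast]
            _ = (N : ℝ) ^ (1:ℝ) * (N : ℝ) ^ (-β) := by rw [Real.rpow_one]
            _ = (N : ℝ) ^ ((1:ℝ) - β) := by
                rw [← Real.rpow_add hNpos, ← sub_eq_add_neg]
  -- now split on α
  by_cases hα1 : 1 < α
  · refine lt_of_le_of_lt ?_ (tsum_rpow_lt_top α hα1)
    apply ENNReal.tsum_le_tsum; intro m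
    apply ENNReal.tsum_le_tsum; intro j
    calc ENNReal.ofReal (((((m + 1) * (j + 1) : ℕ)) : ℝ) ^ (-α)) * P _
        ≤ ENNReal.ofReal (((((m + 1) * (j + 1) : ℕ)) : ℝ) ^ (-α)) * 1 := by
          gcongr; exact prob_le_one
      _ = ENNReal.ofReal (((((m + 1) * (j + 1) : ℕ)) : ℝ) ^ (-α)) := mul_one _
  · push_neg at hα1
    set β : ℝ := (c₀ + 2 - α) / 2 with hβdef
    have hβ1 : 1 < β := by simp only [hβdef]; linarith
    have hβc : β < c₀ := by simp only [hβdef]; linarith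
    set γ : ℝ := α + β - 1 with hγdef
    have hγ1 : 1 < γ := by simp only [hγdef, hβdef]; linarith
    refine lt_of_le_of_lt ?_ (tsum_rpow_lt_top γ hγ1)
    apply ENNReal.tsum_le_tsum; intro m
    apply ENNReal.tsum_le_tsum; intro j
    have hNpos : (0:ℝ) < ((((m + 1) * (j + 1) : ℕ)) : ℝ) := by positivity
    calc ENNReal.ofReal (((((m + 1) * (j + 1) : ℕ)) : ℝ) ^ (-α)) * P _
        ≤ ENNReal.ofReal (((((m + 1) * (j + 1) : ℕ)) : ℝ) ^ (-α)) *
            ENNReal.ofReal (((((m + 1) * (j + 1) : ℕ)) : ℝ) ^ ((1:ℝ) - β)) := by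
          gcongr
          exact key β hβ1 hβc m j
      _ = ENNReal.ofReal (((((m + 1) * (j + 1) : ℕ)) : ℝ) ^ (-γ)) := by
          rw [← ENNReal.ofReal_mul (by positivity), ← Real.rpow_add hNpos]
          congr 2
          simp only [hγdef]; ring
end
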